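/- For a bounded measurable set Ω ⊂ ℝ³ of positive measure, the function H(x) = −(1/8π)∫_Ω |x−y| dy satisfies ΔH(x) = N_Ω(x) for all x ∈ ℝ³, where N_Ω(x) = −(1/4π)∫_Ω |x−y|⁻¹ dy is the Newtonian potential of Ω. -/

import Mathlib

noncomputable section
open MeasureTheory Real Filter Bornology

/-- The Laplacian of `u : ℝ³ → ℝ` at `x`. -/
def lap (u : EuclideanSpace ℝ (Fin 3) → ℝ) (x : EuclideanSpace ℝ (Fin 3)) : ℝ :=
  ∑ i : Fin 3, iteratedDeriv 2 (fun t : ℝ => u (x + t • EuclideanSpace.single i (1 : ℝ))) 0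

/-- The Newtonian potential of `Ω`. -/
def newt (Ω : Set (EuclideanSpace ℝ (Fin 3))) (x : EuclideanSpace ℝ (Fin 3)) : ℝ :=
  -(1 / (4 * π)) * ∫ y in Ω, ‖x - y‖⁻¹

/-- The biharmonic potential of `Ω`. -/
def biharm (Ω : Set (EuclideanSpace ℝ (Fin 3))) (x : EuclideanSpace ℝ (Fin 3)) : ℝ :=
  -(1 / (8 * π)) * ∫ y in Ω, ‖x - y‖

open Set

local notation "E3" => EuclideanSpace ℝ (Fin 3)

lemma oneD (c R : ℝ) (hR : 0 ≤ R) :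
    IntegrableOn (fun t : ℝ => (Real.sqrt |t - c|)⁻¹) (Icc (c - R) (c + R)) := by
  have h0 : IntervalIntegrable (fun u : ℝ => u ^ (-2⁻¹ : ℝ)) volume 0 R :=
    intervalIntegral.intervalIntegrable_rpow' (by norm_num)
  have h1 : IntervalIntegrable (fun u : ℝ => |u| ^ (-2⁻¹ : ℝ)) volume 0 R := by
    rw [intervalIntegrable_iff_integrableOn_Ioc_of_le hR] at h0 ⊢
    exact h0.congr_fun (fun u hu => by rw [abs_of_pos hu.1]) measurableSet_Ioc
  have h2 : IntervalIntegrable (fun u : ℝ => |u| ^ (-2⁻¹ : ℝ)) volume (-R) 0 := by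
    have h3 := ((IntervalIntegrable.iff_comp_neg enorm_ne_top).mp h1)
    rw [neg_zero] at h3
    simpa [abs_neg] using h3.symm
  have key := (h2.trans h1).comp_sub_right c
  rw [show -R + c = c - R by ring, show R + c = c + R by ring] at key
  rw [intervalIntegrable_iff_integrableOn_Icc_of_le (by linarith)] at key
  refine key.congr_fun (fun t _ => ?_) measurableSet_Icc
  show |t - c| ^ (-2⁻¹ : ℝ) = (√|t - c|)⁻¹
  rw [Real.sqrt_eq_rpow, ← Real.rpow_neg (abs_nonneg _)]
  norm_num

lemma hyper_null (x : EuclideanSpace ℝ (Fin 3)) (j : Fin 3) :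
    volume {y : EuclideanSpace ℝ (Fin 3) | y j = x j} = 0 := by
  set K : Submodule ℝ (EuclideanSpace ℝ (Fin 3)) :=
    LinearMap.ker (EuclideanSpace.proj j : EuclideanSpace ℝ (Fin 3) →L[ℝ] ℝ).toLinearMap with hK
  have hKtop : K ≠ ⊤ := by
    intro h
    have h1 : EuclideanSpace.single j (1 : ℝ) ∈ K := h.symm ▸ Submodule.mem_top
    have h2 : (EuclideanSpace.single j (1:ℝ)) j = 0 := by
      simpa [hK, LinearMap.mem_ker] using h1
    simp [EuclideanSpace.single_apply] at h2
  have h0 : volume (K : Set (EuclideanSpace ℝ (Fin 3))) = 0 :=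
    MeasureTheory.Measure.addHaar_submodule _ K hKtop
  have hset : {y : EuclideanSpace ℝ (Fin 3) | y j = x j}
      = (fun y => y + (-(x j • EuclideanSpace.single j (1:ℝ)))) ⁻¹' (K : Set _) := by
    ext y
    simp [hK, LinearMap.mem_ker, EuclideanSpace.single_apply, add_neg_eq_zero]
  rw [hset, measure_preimage_add_right]
  exact h0

lemma coord_le (v : EuclideanSpace ℝ (Fin 3)) (l : Fin 3) : |v l| ≤ ‖v‖ := by
  rw [EuclideanSpace.norm_eq]
  calc |v l| = Real.sqrt ((v l) ^ 2) := (Real.sqrt_sq_eq_abs _).symm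
    _ ≤ _ := by
        apply Real.sqrt_le_sqrt
        have := Finset.single_le_sum (f := fun m => ‖v m‖ ^ 2)
          (fun m _ => by positivity) (Finset.mem_univ l)
        simpa [Real.norm_eq_abs, sq_abs] using this


lemma key (Ω : Set E3) (hΩb : IsBounded Ω) (hΩm : MeasurableSet Ω)
    (x : E3) (i j k : Fin 3) (hji : j ≠ i) (hki : k ≠ i)
    (hsum : ∀ f : Fin 3 → ℝ, ∑ l, f l = f i + f j + f k)
    (hprod : ∀ f : Fin 3 → ℝ, ∏ l, f l = f i * f j * f k) :
    iteratedDeriv 2 (fun t : ℝ => biharm Ω (x + t • EuclideanSpace.single i (1:ℝ))) 0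
      = -(1/(8*π)) * (∫ y in Ω, (‖x - y‖^2 - (x i - y i)^2) / (‖x - y‖^2 * ‖x - y‖)) ∧
    IntegrableOn (fun y => (‖x - y‖^2 - (x i - y i)^2) / (‖x - y‖^2 * ‖x - y‖)) Ω := by
  set a : E3 → ℝ → ℝ := fun y t => x i + t - y i with ha
  set p : E3 → ℝ := fun y => (x j - y j)^2 + (x k - y k)^2 with hp
  set q : E3 → ℝ → ℝ := fun y t => (x i + t - y i)^2 + ((x j - y j)^2 + (x k - y k)^2) with hqd
  -- norm in coordinates
  have hco : ∀ (y : E3) (t : ℝ) (l : Fin 3),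
      (x + t • EuclideanSpace.single i (1:ℝ) - y) l
        = x l + t * (if l = i then 1 else 0) - y l := by
    intro y t l; simp [EuclideanSpace.single_apply]
  have hnorm : ∀ (y : E3) (t : ℝ),
      ‖x + t • EuclideanSpace.single i (1:ℝ) - y‖ = √(q y t) := by
    intro y t
    rw [EuclideanSpace.norm_eq]
    congr 1
    rw [hsum (fun l => ‖(x + t • EuclideanSpace.single i (1:ℝ) - y) l‖ ^ 2)]
    rw [hco y t i, hco y t j, hco y t k, if_pos rfl, if_neg hji, if_neg hki]
    simp only [Real.norm_eq_abs, sq_abs, hqd]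
    ring
  have hq0 : ∀ y t, 0 ≤ q y t := by intro y t; rw [hqd]; positivity
  have hqp : ∀ y, 0 < p y → ∀ t, 0 < q y t := by
    intro y h0 t
    exact lt_of_lt_of_le h0 (le_add_of_nonneg_left (sq_nonneg _))
  -- derivatives
  have hderiva : ∀ (y : E3) (t : ℝ), HasDerivAt (fun s : ℝ => a y s) 1 t := by
    intro y t
    exact ((hasDerivAt_id t).const_add (x i)).sub_const (y i)
  have hderivq : ∀ (y : E3) (t : ℝ), HasDerivAt (fun s => q y s) (2 * a y t) t := by
    intro y t
    have h2 : HasDerivAt (fun s => q y s) _ t := ((hderiva y t).pow 2).add_const ((x j - y j)^2 + (x k - y k)^2)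
    convert h2 using 1
    simp [ha]
  have hderivphi : ∀ (y : E3) (t : ℝ), 0 < p y →
      HasDerivAt (fun s => √(q y s)) (a y t / √(q y t)) t := by
    intro y t h0
    have hpos := hqp y h0 t
    have h : HasDerivAt (fun s => √(q y s)) _ t := (Real.hasDerivAt_sqrt hpos.ne').comp t (hderivq y t)
    convert h using 1
    have hs : √(q y t) ≠ 0 := (Real.sqrt_pos.mpr hpos).ne'
    field_simp
  have hderivF1 : ∀ (y : E3) (t : ℝ), 0 < p y →
      HasDerivAt (fun s => a y s / √(q y s)) (p y / (q y t * √(q y t))) t := by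
    intro y t h0
    have hpos := hqp y h0 t
    have hs : (0:ℝ) < √(q y t) := Real.sqrt_pos.mpr hpos
    have h : HasDerivAt (fun s => a y s / √(q y s)) _ t := (hderiva y t).div (hderivphi y t h0) hs.ne'
    convert h using 1
    rw [Real.sq_sqrt (hq0 y t)]
    have hqa : q y t - (a y t)^2 = p y := by simp [hqd, ha, hp]
    rw [← hqa]
    have hs' : √(q y t) ≠ 0 := hs.ne'
    field_simp
    simp only [Real.sq_sqrt (hq0 y t), Real.mul_self_sqrt (hq0 y t)]
  -- bounds
  have hbound1 : ∀ (y : E3) (t : ℝ), |a y t / √(q y t)| ≤ 1 := by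
    intro y t
    rcases eq_or_lt_of_le (hq0 y t) with h | h
    · have : √(q y t) = 0 := by rw [← h, Real.sqrt_zero]
      simp [this]
    · rw [abs_div, abs_of_nonneg (Real.sqrt_nonneg _),
        div_le_one (Real.sqrt_pos.mpr h)]
      exact Real.abs_le_sqrt (le_add_of_nonneg_right (by positivity))
  have hbound2 : ∀ (y : E3) (t : ℝ), y j ≠ x j → y k ≠ x k →
      |p y / (q y t * √(q y t))| ≤ (√|y j - x j|)⁻¹ * (√|y k - x k|)⁻¹ := by
    intro y t hj hk
    have hA : 0 < |x j - y j| := abs_pos.mpr (sub_ne_zero_of_ne (Ne.symm hj))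
    have hB : 0 < |x k - y k| := abs_pos.mpr (sub_ne_zero_of_ne (Ne.symm hk))
    have hAB : |x j - y j| * |x k - y k| ≤ p y := by
      have h1 : |x j - y j|^2 + |x k - y k|^2 = p y := by simp [hp, sq_abs]
      nlinarith [sq_nonneg (|x j - y j| - |x k - y k|), mul_pos hA hB]
    have hp0 : 0 < p y := lt_of_lt_of_le (mul_pos hA hB) hAB
    have hq_pos := hqp y hp0 t
    have hpq : p y ≤ q y t := le_add_of_nonneg_left (sq_nonneg _)
    rw [abs_of_nonneg (by positivity)]
    have step1 : p y / (q y t * √(q y t)) ≤ (√(p y))⁻¹ := by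
      rw [← one_div, div_le_div_iff₀ (by positivity) (Real.sqrt_pos.mpr hp0)]
      calc p y * √(p y) ≤ q y t * √(q y t) :=
            mul_le_mul hpq (Real.sqrt_le_sqrt hpq) (Real.sqrt_nonneg _) (hq_pos.le)
        _ = 1 * (q y t * √(q y t)) := by ring
    have step2 : (√(p y))⁻¹ ≤ (√(|x j - y j| * |x k - y k|))⁻¹ := by
      apply inv_anti₀ (Real.sqrt_pos.mpr (mul_pos hA hB))
      exact Real.sqrt_le_sqrt hAB
    have step3 : (√(|x j - y j| * |x k - y k|))⁻¹ = (√|y j - x j|)⁻¹ * (√|y k - x k|)⁻¹ := by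
      rw [Real.sqrt_mul (abs_nonneg _), mul_inv, abs_sub_comm (x j), abs_sub_comm (x k)]
    calc p y / (q y t * √(q y t)) ≤ _ := step1
      _ ≤ _ := step2
      _ = _ := step3
  -- basic facts
  have hl : ∀ l : Fin 3, Measurable fun y : E3 => y l := fun l => (measurable_pi_apply l).comp (WithLp.measurable_ofLp 2 _)
  have hmeasq : ∀ t : ℝ, Measurable fun y : E3 => q y t := by
    intro t
    exact ((measurable_const.sub (hl i)).pow_const 2).add
      (((measurable_const.sub (hl j)).pow_const 2).add ((measurable_const.sub (hl k)).pow_const 2))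
  have hmeasphi : ∀ t : ℝ, Measurable fun y : E3 => √(q y t) :=
    fun t => Real.continuous_sqrt.measurable.comp (hmeasq t)
  have hmeasF1 : ∀ t : ℝ, Measurable fun y : E3 => a y t / √(q y t) :=
    fun t => (measurable_const.sub (hl i)).div (hmeasphi t)
  have hmeasp : Measurable p :=
    ((measurable_const.sub (hl j)).pow_const 2).add ((measurable_const.sub (hl k)).pow_const 2)
  have hmeasF2 : ∀ t : ℝ, Measurable fun y : E3 => p y / (q y t * √(q y t)) :=
    fun t => hmeasp.div ((hmeasq t).mul (hmeasphi t))
  have hfin : volume Ω < ⊤ := hΩb.measure_lt_top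
  haveI : IsFiniteMeasure (volume.restrict Ω) :=
    ⟨by rwa [Measure.restrict_apply_univ]⟩
  have hppos : ∀ y : E3, y j ≠ x j → 0 < p y := by
    intro y hj
    have h1 : 0 < (x j - y j)^2 := by
      have : x j - y j ≠ 0 := sub_ne_zero_of_ne (Ne.symm hj)
      positivity
    exact lt_of_lt_of_le h1 (le_add_of_nonneg_right (sq_nonneg _))
  have hae : ∀ᵐ y ∂(volume.restrict Ω), y j ≠ x j ∧ y k ≠ x k := by
    refine ae_restrict_of_ae ?_
    have e1 : ∀ᵐ y : E3, y j ≠ x j := by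
      rw [ae_iff]; simpa [not_not] using hyper_null x j
    have e2 : ∀ᵐ y : E3, y k ≠ x k := by
      rw [ae_iff]; simpa [not_not] using hyper_null x k
    exact e1.and e2
  have hmem : ∀ᵐ y ∂(volume.restrict Ω), y ∈ Ω := ae_restrict_mem hΩm
  obtain ⟨C, hC⟩ := hΩb.exists_norm_le
  have hIntphi : ∀ t : ℝ, Integrable (fun y : E3 => √(q y t)) (volume.restrict Ω) := by
    intro t
    refine Integrable.mono'
      (integrable_const (‖x + t • EuclideanSpace.single i (1:ℝ)‖ + C))
      ((hmeasphi t).aestronglyMeasurable) (hmem.mono fun y hy => ?_)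
    rw [Real.norm_eq_abs, abs_of_nonneg (Real.sqrt_nonneg _), ← hnorm y t]
    calc ‖x + t • EuclideanSpace.single i (1:ℝ) - y‖
        ≤ ‖x + t • EuclideanSpace.single i (1:ℝ)‖ + ‖y‖ := norm_sub_le _ _
      _ ≤ _ := by have := hC y hy; linarith
  -- first derivative under the integral sign
  have H1 : ∀ t₀ : ℝ, HasDerivAt (fun s => ∫ y in Ω, √(q y s))
      (∫ y in Ω, a y t₀ / √(q y t₀)) t₀ := by
    intro t₀
    have := hasDerivAt_integral_of_dominated_loc_of_deriv_le (μ := volume.restrict Ω)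
      (F := fun s (y : E3) => √(q y s)) (F' := fun s (y : E3) => a y s / √(q y s))
      (bound := fun _ => (1:ℝ)) (x₀ := t₀) (Metric.ball_mem_nhds t₀ one_pos)
      (Eventually.of_forall fun s => (hmeasphi s).aestronglyMeasurable)
      (hIntphi t₀)
      ((hmeasF1 t₀).aestronglyMeasurable)
      (hae.mono fun y hy s _ => by rw [Real.norm_eq_abs]; exact hbound1 y s)
      (integrable_const 1)
      (hae.mono fun y hy s _ => hderivphi y s (hppos y hy.1))
    exact this.2
  -- the integrable bound for the second derivative
  obtain ⟨r0, hr0⟩ := hΩb.subset_closedBall x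
  set R := max r0 0 with hRdef
  have hRsub : Ω ⊆ Metric.closedBall x R :=
    hr0.trans (Metric.closedBall_subset_closedBall (le_max_left _ _))
  have hcoordR : ∀ y ∈ Ω, ∀ l : Fin 3, y l ∈ Icc (x l - R) (x l + R) := by
    intro y hy l
    have h1 : ‖y - x‖ ≤ R := by
      have := hRsub hy; rwa [Metric.mem_closedBall, dist_eq_norm] at this
    have h2 : |(y - x) l| ≤ R := le_trans (coord_le _ l) h1
    have h3 : (y - x) l = y l - x l := by simp
    rw [h3, abs_le] at h2
    exact ⟨by linarith [h2.1], by linarith [h2.2]⟩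
  set f : Fin 3 → ℝ → ℝ := fun l s =>
    Set.indicator (Icc (x l - R) (x l + R)) (fun u => if l = i then 1 else (√|u - x l|)⁻¹) s
    with hfdef
  have hfInt : ∀ l, Integrable (f l) volume := by
    intro l
    rw [hfdef]
    simp only
    rw [integrable_indicator_iff measurableSet_Icc]
    by_cases hli : l = i
    · simp only [if_pos hli]
      refine (integrableOn_const_iff enorm_ne_top).mpr (Or.inr ?_)
      rw [Real.volume_Icc]; exact ENNReal.ofReal_lt_top
    · simp only [if_neg hli]
      exact oneD (x l) R (le_max_right _ _)
  have hboundInt : Integrable (fun y : E3 => ∏ l, f l (y l)) volume := by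
    have hpi : Integrable (fun w : Fin 3 → ℝ => ∏ l, f l (w l)) volume :=
      Integrable.fintype_prod (f := f) hfInt
    have hmp := EuclideanSpace.volume_preserving_symm_measurableEquiv_toLp (Fin 3)
    exact (hmp.integrable_comp hpi.aestronglyMeasurable).mpr hpi
  have hboundval : ∀ y ∈ Ω, y j ≠ x j → y k ≠ x k → ∀ t : ℝ,
      |p y / (q y t * √(q y t))| ≤ ∏ l, f l (y l) := by
    intro y hy hj hk t
    have hval : ∏ l, f l (y l) = (√|y j - x j|)⁻¹ * (√|y k - x k|)⁻¹ := by
      rw [hprod (fun l => f l (y l)), hfdef]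
      simp only
      simp only [Set.indicator_of_mem (hcoordR y hy i), Set.indicator_of_mem (hcoordR y hy j),
        Set.indicator_of_mem (hcoordR y hy k)]
      simp [hji, hki]
    rw [hval]
    exact hbound2 y t hj hk
  -- second derivative under the integral sign
  have H2 := hasDerivAt_integral_of_dominated_loc_of_deriv_le (μ := volume.restrict Ω)
      (F := fun s (y : E3) => a y s / √(q y s))
      (F' := fun s (y : E3) => p y / (q y s * √(q y s)))
      (bound := fun y : E3 => ∏ l, f l (y l)) (x₀ := 0) (Metric.ball_mem_nhds 0 one_pos)
      (Eventually.of_forall fun s => (hmeasF1 s).aestronglyMeasurable)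
      (by
        refine Integrable.mono' (integrable_const 1) ((hmeasF1 0).aestronglyMeasurable)
          (Eventually.of_forall fun y => ?_)
        rw [Real.norm_eq_abs]; exact hbound1 y 0)
      ((hmeasF2 0).aestronglyMeasurable)
      ((hae.and hmem).mono fun y hy s _ => by
        rw [Real.norm_eq_abs]; exact hboundval y hy.2 hy.1.1 hy.1.2 s)
      hboundInt.restrict
      (hae.mono fun y hy s _ => hderivF1 y s (hppos y hy.1))
  obtain ⟨hIntF2, H2d⟩ := H2
  -- assembling
  have hbi : (fun t : ℝ => biharm Ω (x + t • EuclideanSpace.single i (1:ℝ)))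
      = fun t => -(1/(8*π)) * ∫ y in Ω, √(q y t) := by
    funext t
    unfold biharm
    congr 1
    exact integral_congr_ae (Eventually.of_forall fun y => hnorm y t)
  have hderiv1 : deriv (fun t : ℝ => biharm Ω (x + t • EuclideanSpace.single i (1:ℝ)))
      = fun s => -(1/(8*π)) * ∫ y in Ω, a y s / √(q y s) := by
    funext s
    rw [hbi]
    exact ((H1 s).const_mul (-(1/(8*π)))).deriv
  have heq2 : ∀ y : E3, (‖x - y‖^2 - (x i - y i)^2) / (‖x - y‖^2 * ‖x - y‖)
      = p y / (q y 0 * √(q y 0)) := by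
    intro y
    have h00 : ‖x - y‖ = √(q y 0) := by
      have := hnorm y 0; simpa using this
    rw [h00, Real.sq_sqrt (hq0 y 0)]
    have hnum : q y 0 - (x i - y i)^2 = p y := by simp [hqd, hp]
    rw [hnum]
  constructor
  · rw [show (2:ℕ) = 1 + 1 from rfl, iteratedDeriv_succ, iteratedDeriv_one, hderiv1]
    rw [(H2d.const_mul (-(1/(8*π)))).deriv]
    congr 1
    exact integral_congr_ae (Eventually.of_forall fun y => (heq2 y).symm)
  · exact Integrable.congr hIntF2 (Eventually.of_forall fun y => (heq2 y).symm)



/-- For a bounded measurable set `Ω ⊂ ℝ³` of positive measure, the biharmonic potential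
`H(x) = −(1/8π)∫_Ω |x−y| dy` satisfies `ΔH = N_Ω` everywhere. -/
theorem stmt_4 (Ω : Set (EuclideanSpace ℝ (Fin 3))) (hΩb : IsBounded Ω)
    (hΩm : MeasurableSet Ω) (hΩpos : 0 < volume Ω) :
    ∀ x, lap (biharm Ω) x = newt Ω x := by
  intro x
  have h0 := key Ω hΩb hΩm x 0 1 2 (by decide) (by decide)
    (fun f => by rw [Fin.sum_univ_three]) (fun f => by rw [Fin.prod_univ_three])
  have h1 := key Ω hΩb hΩm x 1 0 2 (by decide) (by decide)
    (fun f => by rw [Fin.sum_univ_three]; ring) (fun f => by rw [Fin.prod_univ_three]; ring)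
  have h2 := key Ω hΩb hΩm x 2 0 1 (by decide) (by decide)
    (fun f => by rw [Fin.sum_univ_three]; ring) (fun f => by rw [Fin.prod_univ_three]; ring)
  have hsum3 : ∀ y : E3,
      (‖x - y‖^2 - (x 0 - y 0)^2) / (‖x - y‖^2 * ‖x - y‖)
      + (‖x - y‖^2 - (x 1 - y 1)^2) / (‖x - y‖^2 * ‖x - y‖)
      + (‖x - y‖^2 - (x 2 - y 2)^2) / (‖x - y‖^2 * ‖x - y‖) = 2 * ‖x - y‖⁻¹ := by
    intro y
    by_cases hxy : ‖x - y‖ = 0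
    · have hzero : x - y = 0 := norm_eq_zero.mp hxy
      have hcoords : ∀ l : Fin 3, x l - y l = 0 := by
        intro l
        have : (x - y) l = (0 : E3) l := by rw [hzero]
        simpa using this
      simp [hxy, hcoords 0, hcoords 1, hcoords 2]
    · have hN : ‖x - y‖^2 = (x 0 - y 0)^2 + (x 1 - y 1)^2 + (x 2 - y 2)^2 := by
        rw [EuclideanSpace.norm_eq, Real.sq_sqrt (by positivity), Fin.sum_univ_three]
        simp [Real.norm_eq_abs, sq_abs]
      rw [← add_div, ← add_div,
        show ‖x - y‖^2 - (x 0 - y 0)^2 + (‖x - y‖^2 - (x 1 - y 1)^2)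
          + (‖x - y‖^2 - (x 2 - y 2)^2) = 2 * ‖x - y‖^2 by rw [hN]; ring]
      rw [div_eq_iff (by positivity : ‖x - y‖^2 * ‖x - y‖ ≠ 0)]
      field_simp
  unfold lap
  have hadd : ∫ y in Ω,
      ((‖x - y‖^2 - (x 0 - y 0)^2) / (‖x - y‖^2 * ‖x - y‖)
      + (‖x - y‖^2 - (x 1 - y 1)^2) / (‖x - y‖^2 * ‖x - y‖)
      + (‖x - y‖^2 - (x 2 - y 2)^2) / (‖x - y‖^2 * ‖x - y‖))
      = (∫ y in Ω, (‖x - y‖^2 - (x 0 - y 0)^2) / (‖x - y‖^2 * ‖x - y‖))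
      + (∫ y in Ω, (‖x - y‖^2 - (x 1 - y 1)^2) / (‖x - y‖^2 * ‖x - y‖))
      + (∫ y in Ω, (‖x - y‖^2 - (x 2 - y 2)^2) / (‖x - y‖^2 * ‖x - y‖)) := by
    have h01 : IntegrableOn (fun y : E3 =>
        (‖x - y‖^2 - (x 0 - y 0)^2) / (‖x - y‖^2 * ‖x - y‖)
        + (‖x - y‖^2 - (x 1 - y 1)^2) / (‖x - y‖^2 * ‖x - y‖)) Ω := h0.2.add h1.2
    rw [integral_add h01 h2.2, integral_add h0.2 h1.2]
  rw [Fin.sum_univ_three, h0.1, h1.1, h2.1, ← mul_add, ← mul_add, ← hadd]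
  rw [integral_congr_ae (Eventually.of_forall hsum3)]
  rw [MeasureTheory.integral_const_mul]
  unfold newt
  have hpi := Real.pi_ne_zero
  field_simp
  ring

end
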